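/- The pair β_n = (1-q) q^{n²-n}/(q;q)_{2n}, with α_{3m-1} = q^{3m²+2m} - q^{3m²-4m+1}, α_{3m} = q^{3m²-2m} - q^{3m²+4m+1}, α_{3m+1} = 0, is a Bailey pair relative to a = q; that is, β_n = ∑_{r=0}^n α_r/((q;q)_{n-r}(q²;q)_{n+r}) for all n ≥ 0. -/

import Mathlib

open Finset

noncomputable def qPoch (a q : ℂ) (n : ℕ) : ℂ := ∏ i ∈ Finset.range n, (1 - a * q ^ i)

noncomputable def qInf (q : ℂ) : ℂ := ∏' i : ℕ, (1 - q ^ (i + 1))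

def zsgn (m : ℤ) : ℤ := if 0 ≤ m then 1 else -1

noncomputable def alphaS6 (q : ℂ) (n : ℕ) : ℂ :=
  if n % 3 = 0 then q ^ (3 * ((n : ℤ) / 3) ^ 2 - 2 * ((n : ℤ) / 3) : ℤ) - q ^ (3 * ((n : ℤ) / 3) ^ 2 + 4 * ((n : ℤ) / 3) + 1 : ℤ)
  else if n % 3 = 1 then 0
  else q ^ (3 * (((n : ℤ) + 1) / 3) ^ 2 + 2 * (((n : ℤ) + 1) / 3) : ℤ) - q ^ (3 * (((n : ℤ) + 1) / 3) ^ 2 - 4 * (((n : ℤ) + 1) / 3) + 1 : ℤ)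

/-! ### Auxiliary machinery -/

section Aux

variable (q : ℂ)

lemma qPoch_succ (a : ℂ) (k : ℕ) :
    qPoch a q (k + 1) = qPoch a q k * (1 - a * q ^ k) := Finset.prod_range_succ _ _

lemma one_sub_ne (hq : ‖q‖ < 1) (k : ℕ) : (1 : ℂ) - q * q ^ k ≠ 0 := by
  intro h
  have h1 : q * q ^ k = 1 := by linear_combination -h
  have h2 : ‖q * q ^ k‖ = 1 := by rw [h1, norm_one]
  have h3 : ‖q * q ^ k‖ < 1 := by
    rw [norm_mul, norm_pow]
    calc ‖q‖ * ‖q‖ ^ k = ‖q‖ ^ (k + 1) := by ring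
      _ < 1 := pow_lt_one₀ (norm_nonneg q) hq (Nat.succ_ne_zero k)
  linarith

lemma qPoch_ne (hq : ‖q‖ < 1) (k : ℕ) : qPoch q q k ≠ 0 := by
  unfold qPoch
  exact Finset.prod_ne_zero_iff.2 fun i _ => one_sub_ne q hq i

lemma qPoch_add (a b : ℕ) :
    qPoch q q (a + b) = qPoch q q a * ∏ i ∈ Finset.range b, (1 - q * q ^ (a + i)) := by
  unfold qPoch
  rw [Finset.prod_range_add]

/-- truncated Gaussian binomial -/
noncomputable def Bg (N : ℕ) (k : ℤ) : ℂ :=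
  if 0 ≤ k ∧ k ≤ N then qPoch q q N / (qPoch q q k.toNat * qPoch q q (N - k.toNat)) else 0

lemma Bg_neg (N : ℕ) (k : ℤ) (h : k < 0) : Bg q N k = 0 := by
  rw [Bg, if_neg]; omega

lemma Bg_eq (N a b : ℕ) (k : ℤ) (hk : k = a) (hab : a + b = N) :
    Bg q N k = qPoch q q N / (qPoch q q a * qPoch q q b) := by
  subst hk
  rw [Bg, if_pos ⟨by positivity, by exact_mod_cast Nat.le.intro hab⟩, Int.toNat_natCast,
    show N - a = b by omega]

noncomputable def Wt (n r : ℕ) : ℂ :=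
  alphaS6 q r * ((1 - q ^ (2 * n + 1)) * Bg q (2 * n + 3) ((n : ℤ) + 1 - r)
    - q ^ (2 * n) * (1 - q ^ (2 * n + 3)) * Bg q (2 * n + 1) ((n : ℤ) - r))

noncomputable def Gt (n j : ℕ) : ℂ :=
  (1 - q ^ (2 * n + 3)) * (q ^ (3 * j ^ 2 + 2 * j) * (1 - q ^ (2 * j + 1))
    + q ^ (n + 3 * j ^ 2 + j) * (1 - q ^ (4 * j + 2))) * Bg q (2 * n + 1) ((n : ℤ) - 3 * j - 1)

/-! ### alphaS6 evaluation lemmas -/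

lemma alpha_eval0 : alphaS6 q 0 = 1 - q := by
  rw [alphaS6, if_pos rfl]
  norm_num

lemma alpha_eval1 (m : ℕ) : alphaS6 q (3 * m + 1) = 0 := by
  rw [alphaS6, if_neg (by omega), if_pos (by omega)]

lemma alpha_eval2 (m : ℕ) :
    alphaS6 q (3 * m + 2) = q ^ (3 * m ^ 2 + 8 * m + 5) - q ^ (3 * m ^ 2 + 2 * m) := by
  rw [alphaS6, if_neg (by omega), if_neg (by omega)]
  have h2 : ((3 * m + 2 : ℕ) : ℤ) + 1 = 3 * ((m : ℤ) + 1) := by push_cast; ring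
  rw [h2, Int.mul_ediv_cancel_left _ (by norm_num)]
  rw [show (3 * ((m : ℤ) + 1) ^ 2 + 2 * ((m : ℤ) + 1)) = ((3 * m ^ 2 + 8 * m + 5 : ℕ) : ℤ) by push_cast; ring]
  rw [show (3 * ((m : ℤ) + 1) ^ 2 - 4 * ((m : ℤ) + 1) + 1) = ((3 * m ^ 2 + 2 * m : ℕ) : ℤ) by push_cast; ring]
  rw [zpow_natCast, zpow_natCast]

lemma alpha_eval3 (m : ℕ) :
    alphaS6 q (3 * m + 3) = q ^ (3 * m ^ 2 + 4 * m + 1) - q ^ (3 * m ^ 2 + 10 * m + 8) := by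
  rw [alphaS6, if_pos (by omega)]
  have h2 : ((3 * m + 3 : ℕ) : ℤ) = 3 * ((m : ℤ) + 1) := by push_cast; ring
  rw [h2, Int.mul_ediv_cancel_left _ (by norm_num)]
  rw [show (3 * ((m : ℤ) + 1) ^ 2 - 2 * ((m : ℤ) + 1)) = ((3 * m ^ 2 + 4 * m + 1 : ℕ) : ℤ) by push_cast; ring]
  rw [show (3 * ((m : ℤ) + 1) ^ 2 + 4 * ((m : ℤ) + 1) + 1) = ((3 * m ^ 2 + 10 * m + 8 : ℕ) : ℤ) by push_cast; ring]
  rw [zpow_natCast, zpow_natCast]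

end Aux


section Key

variable (q : ℂ)

lemma qPoch_e1 (k : ℕ) : qPoch q q (k + 1) = qPoch q q k * (1 - q * q ^ k) :=
  qPoch_succ q q k

lemma qPoch_e2 (k : ℕ) :
    qPoch q q (k + 2) = qPoch q q k * ((1 - q * q ^ k) * (1 - q * q ^ (k + 1))) := by
  rw [show k + 2 = (k + 1) + 1 from rfl, qPoch_succ, qPoch_e1]; ring

lemma qPoch_e3 (k : ℕ) :
    qPoch q q (k + 3) = qPoch q q k *
      ((1 - q * q ^ k) * (1 - q * q ^ (k + 1)) * (1 - q * q ^ (k + 2))) := by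
  rw [show k + 3 = (k + 2) + 1 from rfl, qPoch_succ, qPoch_e2]; ring

set_option maxHeartbeats 3200000 in
lemma qPoch_e4 (k : ℕ) :
    qPoch q q (k + 4) = qPoch q q k *
      ((1 - q * q ^ k) * (1 - q * q ^ (k + 1)) * (1 - q * q ^ (k + 2)) * (1 - q * q ^ (k + 3))) := by
  rw [show k + 4 = (k + 3) + 1 from rfl, qPoch_succ, qPoch_e3]; ring

lemma qPoch_v1 : qPoch q q 1 = 1 - q := by simp [qPoch]

lemma qPoch_v2 : qPoch q q 2 = (1 - q) * (1 - q * q) := by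
  rw [show (2:ℕ) = 1 + 1 from rfl, qPoch_succ, qPoch_v1]; ring

lemma qPoch_sq (k : ℕ) : (1 - q) * qPoch (q ^ 2) q k = qPoch q q (k + 1) := by
  rw [qPoch, qPoch, Finset.prod_range_succ']
  rw [show (1 : ℂ) - q * q ^ (0:ℕ) = 1 - q by ring, mul_comm]
  congr 1
  exact Finset.prod_congr rfl fun i _ => by ring

set_option maxHeartbeats 1000000 in
lemma key2_generic (hq : ‖q‖ < 1) (m t : ℕ) :
    Wt q (3 * m + 4 + t) (3 * m + 2) + Wt q (3 * m + 4 + t) (3 * m + 3)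
      = Gt q (3 * m + 4 + t) (m + 1) - Gt q (3 * m + 4 + t) m := by
  have hA : qPoch q q t ≠ 0 := qPoch_ne q hq t
  have hA1 : qPoch q q (t + 1) ≠ 0 := qPoch_ne q hq _
  have hA2 : qPoch q q (t + 2) ≠ 0 := qPoch_ne q hq _
  have hA3 : qPoch q q (t + 3) ≠ 0 := qPoch_ne q hq _
  have hB : qPoch q q (6 * m + t + 6) ≠ 0 := qPoch_ne q hq _
  have hB1 : qPoch q q (6 * m + t + 7) ≠ 0 := qPoch_ne q hq _
  have hB2 : qPoch q q (6 * m + t + 8) ≠ 0 := qPoch_ne q hq _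
  have hB3 : qPoch q q (6 * m + t + 9) ≠ 0 := qPoch_ne q hq _
  have hC : qPoch q q (2 * (3 * m + 4 + t) + 1) ≠ 0 := qPoch_ne q hq _
  have s1 : (1 : ℂ) - q * q ^ (t + 1) ≠ 0 := one_sub_ne q hq _
  have s2 : (1 : ℂ) - q * q ^ (t + 2) ≠ 0 := one_sub_ne q hq _
  have s0 : (1 : ℂ) - q * q ^ t ≠ 0 := one_sub_ne q hq _
  have u0 : (1 : ℂ) - q * q ^ (6 * m + t + 6) ≠ 0 := one_sub_ne q hq _
  have u1 : (1 : ℂ) - q * q ^ (6 * m + t + 7) ≠ 0 := one_sub_ne q hq _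
  have u2 : (1 : ℂ) - q * q ^ (6 * m + t + 8) ≠ 0 := one_sub_ne q hq _
  have eA1 : qPoch q q (t + 1) = qPoch q q t * (1 - q * q ^ t) := qPoch_e1 q t
  have eA2 : qPoch q q (t + 2) = qPoch q q (t + 1) * (1 - q * q ^ (t + 1)) := by
    rw [show t + 2 = (t + 1) + 1 from rfl]; exact qPoch_e1 q (t + 1)
  have eA3 : qPoch q q (t + 3) = qPoch q q (t + 2) * (1 - q * q ^ (t + 2)) := by
    rw [show t + 3 = (t + 2) + 1 from rfl]; exact qPoch_e1 q (t + 2)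
  have eB1 : qPoch q q (6 * m + t + 7) = qPoch q q (6 * m + t + 6) * (1 - q * q ^ (6 * m + t + 6)) := by
    rw [show 6 * m + t + 7 = (6 * m + t + 6) + 1 from by ring]; exact qPoch_e1 q (6 * m + t + 6)
  have eB2 : qPoch q q (6 * m + t + 8) = qPoch q q (6 * m + t + 7) * (1 - q * q ^ (6 * m + t + 7)) := by
    rw [show 6 * m + t + 8 = (6 * m + t + 7) + 1 from by ring]; exact qPoch_e1 q (6 * m + t + 7)
  have eB3 : qPoch q q (6 * m + t + 9) = qPoch q q (6 * m + t + 8) * (1 - q * q ^ (6 * m + t + 8)) := by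
    rw [show 6 * m + t + 9 = (6 * m + t + 8) + 1 from by ring]; exact qPoch_e1 q (6 * m + t + 8)
  have eC : qPoch q q (2 * (3 * m + 4 + t) + 3) = qPoch q q (2 * (3 * m + 4 + t) + 1)
      * ((1 - q * q ^ (2 * (3 * m + 4 + t) + 1)) * (1 - q * q ^ (2 * (3 * m + 4 + t) + 2))) := by
    rw [show 2 * (3 * m + 4 + t) + 3 = (2 * (3 * m + 4 + t) + 1) + 2 from by ring,
      qPoch_e2 q (2 * (3 * m + 4 + t) + 1)]
  set K : ℂ := qPoch q q (2 * (3 * m + 4 + t) + 1) / (qPoch q q (t + 3) * qPoch q q (6 * m + t + 9)) with hK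
  have hQ1 : qPoch q q (2 * (3 * m + 4 + t) + 3) / (qPoch q q (t + 3) * qPoch q q (6 * m + t + 8))
      = ((1 - q * q ^ (2 * (3 * m + 4 + t) + 1)) * (1 - q * q ^ (2 * (3 * m + 4 + t) + 2))
          * (1 - q * q ^ (6 * m + t + 8))) * K := by
    rw [hK, ← mul_div_assoc, div_eq_div_iff (mul_ne_zero hA3 hB2) (mul_ne_zero hA3 hB3), eC, eB3]
    ring
  have hQ2 : qPoch q q (2 * (3 * m + 4 + t) + 1) / (qPoch q q (t + 2) * qPoch q q (6 * m + t + 7))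
      = ((1 - q * q ^ (t + 2)) * ((1 - q * q ^ (6 * m + t + 7)) * (1 - q * q ^ (6 * m + t + 8)))) * K := by
    rw [hK, ← mul_div_assoc, div_eq_div_iff (mul_ne_zero hA2 hB1) (mul_ne_zero hA3 hB3), eA3, eB3, eB2]
    ring
  have hQ3 : qPoch q q (2 * (3 * m + 4 + t) + 3) / (qPoch q q (t + 2) * qPoch q q (6 * m + t + 9))
      = ((1 - q * q ^ (2 * (3 * m + 4 + t) + 1)) * (1 - q * q ^ (2 * (3 * m + 4 + t) + 2))
          * (1 - q * q ^ (t + 2))) * K := by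
    rw [hK, ← mul_div_assoc, div_eq_div_iff (mul_ne_zero hA2 hB3) (mul_ne_zero hA3 hB3), eC, eA3]
    ring
  have hQ4 : qPoch q q (2 * (3 * m + 4 + t) + 1) / (qPoch q q (t + 1) * qPoch q q (6 * m + t + 8))
      = ((1 - q * q ^ (t + 1)) * (1 - q * q ^ (t + 2)) * (1 - q * q ^ (6 * m + t + 8))) * K := by
    rw [hK, ← mul_div_assoc, div_eq_div_iff (mul_ne_zero hA1 hB2) (mul_ne_zero hA3 hB3), eA3, eA2, eB3]
    ring
  have hQ5 : qPoch q q (2 * (3 * m + 4 + t) + 1) / (qPoch q q t * qPoch q q (6 * m + t + 9))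
      = ((1 - q * q ^ t) * (1 - q * q ^ (t + 1)) * (1 - q * q ^ (t + 2))) * K := by
    rw [hK, ← mul_div_assoc, div_eq_div_iff (mul_ne_zero hA hB3) (mul_ne_zero hA3 hB3), eA3, eA2, eA1]
    ring
  have hQ6 : qPoch q q (2 * (3 * m + 4 + t) + 1) / (qPoch q q (t + 3) * qPoch q q (6 * m + t + 6))
      = ((1 - q * q ^ (6 * m + t + 6)) * (1 - q * q ^ (6 * m + t + 7)) * (1 - q * q ^ (6 * m + t + 8))) * K := by
    rw [hK, ← mul_div_assoc, div_eq_div_iff (mul_ne_zero hA3 hB) (mul_ne_zero hA3 hB3), eB3, eB2, eB1]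
    ring
  rw [Wt, Wt, Gt, Gt, alpha_eval2, alpha_eval3,
    Bg_eq q (2 * (3 * m + 4 + t) + 3) (t + 3) (6 * m + t + 8) _ (by push_cast; ring) (by ring),
    Bg_eq q (2 * (3 * m + 4 + t) + 1) (t + 2) (6 * m + t + 7) _ (by push_cast; ring) (by ring),
    Bg_eq q (2 * (3 * m + 4 + t) + 3) (t + 2) (6 * m + t + 9) _ (by push_cast; ring) (by ring),
    Bg_eq q (2 * (3 * m + 4 + t) + 1) (t + 1) (6 * m + t + 8) _ (by push_cast; ring) (by ring),
    Bg_eq q (2 * (3 * m + 4 + t) + 1) t (6 * m + t + 9) _ (by push_cast; ring) (by ring),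
    Bg_eq q (2 * (3 * m + 4 + t) + 1) (t + 3) (6 * m + t + 6) _ (by push_cast; ring) (by ring),
    hQ1, hQ2, hQ3, hQ4, hQ5, hQ6]
  ring

lemma key2_b0 (hq : ‖q‖ < 1) (m : ℕ) :
    Wt q (3 * m + 1) (3 * m + 2) + Wt q (3 * m + 1) (3 * m + 3)
      = Gt q (3 * m + 1) (m + 1) - Gt q (3 * m + 1) m := by
  have h0 : qPoch q q 0 = 1 := Finset.prod_range_zero _
  have hq1 : qPoch q q (2 * (3 * m + 1) + 3) / (qPoch q q 0 * qPoch q q (2 * (3 * m + 1) + 3))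
      = 1 := by
    rw [h0, one_mul, div_self (qPoch_ne q hq _)]
  have hq6 : qPoch q q (2 * (3 * m + 1) + 1) / (qPoch q q 0 * qPoch q q (2 * (3 * m + 1) + 1))
      = 1 := by
    rw [h0, one_mul, div_self (qPoch_ne q hq _)]
  rw [Wt, Wt, Gt, Gt, alpha_eval2, alpha_eval3,
    show Bg q (2 * (3 * m + 1) + 3) (((3 * m + 1 : ℕ) : ℤ) + 1 - ((3 * m + 2 : ℕ) : ℤ))
        = qPoch q q (2 * (3 * m + 1) + 3) / (qPoch q q 0 * qPoch q q (2 * (3 * m + 1) + 3)) from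
      Bg_eq q (2 * (3 * m + 1) + 3) 0 (2 * (3 * m + 1) + 3) _ (by push_cast <;> omega) (by ring),
    show Bg q (2 * (3 * m + 1) + 1) (((3 * m + 1 : ℕ) : ℤ) - ((3 * m + 2 : ℕ) : ℤ)) = 0 from
      Bg_neg q _ _ (by push_cast <;> omega),
    show Bg q (2 * (3 * m + 1) + 3) (((3 * m + 1 : ℕ) : ℤ) + 1 - ((3 * m + 3 : ℕ) : ℤ)) = 0 from
      Bg_neg q _ _ (by push_cast <;> omega),
    show Bg q (2 * (3 * m + 1) + 1) (((3 * m + 1 : ℕ) : ℤ) - ((3 * m + 3 : ℕ) : ℤ)) = 0 from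
      Bg_neg q _ _ (by push_cast <;> omega),
    show Bg q (2 * (3 * m + 1) + 1) (((3 * m + 1 : ℕ) : ℤ) - 3 * ((m + 1 : ℕ) : ℤ) - 1) = 0 from
      Bg_neg q _ _ (by push_cast <;> omega),
    show Bg q (2 * (3 * m + 1) + 1) (((3 * m + 1 : ℕ) : ℤ) - 3 * ((m : ℕ) : ℤ) - 1)
        = qPoch q q (2 * (3 * m + 1) + 1) / (qPoch q q 0 * qPoch q q (2 * (3 * m + 1) + 1)) from
      Bg_eq q (2 * (3 * m + 1) + 1) 0 (2 * (3 * m + 1) + 1) _ (by push_cast <;> omega) (by ring),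
    hq1, hq6]
  ring

lemma key2_b1 (hq : ‖q‖ < 1) (m : ℕ) :
    Wt q (3 * m + 2) (3 * m + 2) + Wt q (3 * m + 2) (3 * m + 3)
      = Gt q (3 * m + 2) (m + 1) - Gt q (3 * m + 2) m := by
  have h0 : qPoch q q 0 = 1 := Finset.prod_range_zero _
  have v1 : (1 : ℂ) - q ≠ 0 := by simpa using one_sub_ne q hq 0
  have hP1 : qPoch q q 1 ≠ 0 := qPoch_ne q hq _
  have hP4 : qPoch q q (6 * m + 4) ≠ 0 := qPoch_ne q hq _
  have hP6 : qPoch q q (6 * m + 6) ≠ 0 := qPoch_ne q hq _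
  have hq1 : qPoch q q (2 * (3 * m + 2) + 3) / (qPoch q q 1 * qPoch q q (6 * m + 6))
      = (1 - q * q ^ (6 * m + 6)) / (1 - q) := by
    rw [div_eq_div_iff (mul_ne_zero hP1 hP6) v1,
      show 2 * (3 * m + 2) + 3 = (6 * m + 6) + 1 by ring, qPoch_e1 q (6 * m + 6), qPoch_v1 q]
    ring
  have hq2 : qPoch q q (2 * (3 * m + 2) + 1) / (qPoch q q 0 * qPoch q q (6 * m + 5)) = 1 := by
    rw [h0, one_mul, show 2 * (3 * m + 2) + 1 = 6 * m + 5 by ring,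
      div_self (qPoch_ne q hq _)]
  have hq3 : qPoch q q (2 * (3 * m + 2) + 3) / (qPoch q q 0 * qPoch q q (6 * m + 7)) = 1 := by
    rw [h0, one_mul, show 2 * (3 * m + 2) + 3 = 6 * m + 7 by ring,
      div_self (qPoch_ne q hq _)]
  have hq6 : qPoch q q (2 * (3 * m + 2) + 1) / (qPoch q q 1 * qPoch q q (6 * m + 4))
      = (1 - q * q ^ (6 * m + 4)) / (1 - q) := by
    rw [div_eq_div_iff (mul_ne_zero hP1 hP4) v1,
      show 2 * (3 * m + 2) + 1 = (6 * m + 4) + 1 by ring, qPoch_e1 q (6 * m + 4), qPoch_v1 q]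
    ring
  rw [Wt, Wt, Gt, Gt, alpha_eval2, alpha_eval3,
    show Bg q (2 * (3 * m + 2) + 3) (((3 * m + 2 : ℕ) : ℤ) + 1 - ((3 * m + 2 : ℕ) : ℤ))
        = qPoch q q (2 * (3 * m + 2) + 3) / (qPoch q q 1 * qPoch q q (6 * m + 6)) from
      Bg_eq q (2 * (3 * m + 2) + 3) 1 (6 * m + 6) _ (by push_cast <;> omega) (by ring),
    show Bg q (2 * (3 * m + 2) + 1) (((3 * m + 2 : ℕ) : ℤ) - ((3 * m + 2 : ℕ) : ℤ))
        = qPoch q q (2 * (3 * m + 2) + 1) / (qPoch q q 0 * qPoch q q (6 * m + 5)) from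
      Bg_eq q (2 * (3 * m + 2) + 1) 0 (6 * m + 5) _ (by push_cast <;> omega) (by ring),
    show Bg q (2 * (3 * m + 2) + 3) (((3 * m + 2 : ℕ) : ℤ) + 1 - ((3 * m + 3 : ℕ) : ℤ))
        = qPoch q q (2 * (3 * m + 2) + 3) / (qPoch q q 0 * qPoch q q (6 * m + 7)) from
      Bg_eq q (2 * (3 * m + 2) + 3) 0 (6 * m + 7) _ (by push_cast <;> omega) (by ring),
    show Bg q (2 * (3 * m + 2) + 1) (((3 * m + 2 : ℕ) : ℤ) - ((3 * m + 3 : ℕ) : ℤ)) = 0 from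
      Bg_neg q _ _ (by push_cast <;> omega),
    show Bg q (2 * (3 * m + 2) + 1) (((3 * m + 2 : ℕ) : ℤ) - 3 * ((m + 1 : ℕ) : ℤ) - 1) = 0 from
      Bg_neg q _ _ (by push_cast <;> omega),
    show Bg q (2 * (3 * m + 2) + 1) (((3 * m + 2 : ℕ) : ℤ) - 3 * ((m : ℕ) : ℤ) - 1)
        = qPoch q q (2 * (3 * m + 2) + 1) / (qPoch q q 1 * qPoch q q (6 * m + 4)) from
      Bg_eq q (2 * (3 * m + 2) + 1) 1 (6 * m + 4) _ (by push_cast <;> omega) (by ring),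
    hq1, hq2, hq3, hq6]
  field_simp
  ring

lemma key2_b2 (hq : ‖q‖ < 1) (m : ℕ) :
    Wt q (3 * m + 3) (3 * m + 2) + Wt q (3 * m + 3) (3 * m + 3)
      = Gt q (3 * m + 3) (m + 1) - Gt q (3 * m + 3) m := by
  have h0 : qPoch q q 0 = 1 := Finset.prod_range_zero _
  have v1 : (1 : ℂ) - q ≠ 0 := by simpa using one_sub_ne q hq 0
  have v2 : (1 : ℂ) - q * q ≠ 0 := by simpa using one_sub_ne q hq 1
  have hP1 : qPoch q q 1 ≠ 0 := qPoch_ne q hq _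
  have hP2 : qPoch q q 2 ≠ 0 := qPoch_ne q hq _
  have hP5 : qPoch q q (6 * m + 5) ≠ 0 := qPoch_ne q hq _
  have hP6 : qPoch q q (6 * m + 6) ≠ 0 := qPoch_ne q hq _
  have hP7 : qPoch q q (6 * m + 7) ≠ 0 := qPoch_ne q hq _
  have hP8 : qPoch q q (6 * m + 8) ≠ 0 := qPoch_ne q hq _
  have hq1 : qPoch q q (2 * (3 * m + 3) + 3) / (qPoch q q 2 * qPoch q q (6 * m + 7))
      = (1 - q * q ^ (6 * m + 7)) * (1 - q * q ^ (6 * m + 8)) / ((1 - q) * (1 - q * q)) := by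
    rw [div_eq_div_iff (mul_ne_zero hP2 hP7) (mul_ne_zero v1 v2),
      show 2 * (3 * m + 3) + 3 = (6 * m + 7) + 2 by ring, qPoch_e2 q (6 * m + 7), qPoch_v2 q]
    ring
  have hq2 : qPoch q q (2 * (3 * m + 3) + 1) / (qPoch q q 1 * qPoch q q (6 * m + 6))
      = (1 - q * q ^ (6 * m + 6)) / (1 - q) := by
    rw [div_eq_div_iff (mul_ne_zero hP1 hP6) v1,
      show 2 * (3 * m + 3) + 1 = (6 * m + 6) + 1 by ring, qPoch_e1 q (6 * m + 6), qPoch_v1 q]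
    ring
  have hq3 : qPoch q q (2 * (3 * m + 3) + 3) / (qPoch q q 1 * qPoch q q (6 * m + 8))
      = (1 - q * q ^ (6 * m + 8)) / (1 - q) := by
    rw [div_eq_div_iff (mul_ne_zero hP1 hP8) v1,
      show 2 * (3 * m + 3) + 3 = (6 * m + 8) + 1 by ring, qPoch_e1 q (6 * m + 8), qPoch_v1 q]
    ring
  have hq4 : qPoch q q (2 * (3 * m + 3) + 1) / (qPoch q q 0 * qPoch q q (6 * m + 7)) = 1 := by
    rw [h0, one_mul, show 2 * (3 * m + 3) + 1 = 6 * m + 7 by ring, div_self (qPoch_ne q hq _)]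
  have hq6 : qPoch q q (2 * (3 * m + 3) + 1) / (qPoch q q 2 * qPoch q q (6 * m + 5))
      = (1 - q * q ^ (6 * m + 5)) * (1 - q * q ^ (6 * m + 6)) / ((1 - q) * (1 - q * q)) := by
    rw [div_eq_div_iff (mul_ne_zero hP2 hP5) (mul_ne_zero v1 v2),
      show 2 * (3 * m + 3) + 1 = (6 * m + 5) + 2 by ring, qPoch_e2 q (6 * m + 5), qPoch_v2 q]
    ring
  rw [Wt, Wt, Gt, Gt, alpha_eval2, alpha_eval3,
    show Bg q (2 * (3 * m + 3) + 3) (((3 * m + 3 : ℕ) : ℤ) + 1 - ((3 * m + 2 : ℕ) : ℤ))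
        = qPoch q q (2 * (3 * m + 3) + 3) / (qPoch q q 2 * qPoch q q (6 * m + 7)) from
      Bg_eq q (2 * (3 * m + 3) + 3) 2 (6 * m + 7) _ (by push_cast <;> omega) (by ring),
    show Bg q (2 * (3 * m + 3) + 1) (((3 * m + 3 : ℕ) : ℤ) - ((3 * m + 2 : ℕ) : ℤ))
        = qPoch q q (2 * (3 * m + 3) + 1) / (qPoch q q 1 * qPoch q q (6 * m + 6)) from
      Bg_eq q (2 * (3 * m + 3) + 1) 1 (6 * m + 6) _ (by push_cast <;> omega) (by ring),
    show Bg q (2 * (3 * m + 3) + 3) (((3 * m + 3 : ℕ) : ℤ) + 1 - ((3 * m + 3 : ℕ) : ℤ))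
        = qPoch q q (2 * (3 * m + 3) + 3) / (qPoch q q 1 * qPoch q q (6 * m + 8)) from
      Bg_eq q (2 * (3 * m + 3) + 3) 1 (6 * m + 8) _ (by push_cast <;> omega) (by ring),
    show Bg q (2 * (3 * m + 3) + 1) (((3 * m + 3 : ℕ) : ℤ) - ((3 * m + 3 : ℕ) : ℤ))
        = qPoch q q (2 * (3 * m + 3) + 1) / (qPoch q q 0 * qPoch q q (6 * m + 7)) from
      Bg_eq q (2 * (3 * m + 3) + 1) 0 (6 * m + 7) _ (by push_cast <;> omega) (by ring),
    show Bg q (2 * (3 * m + 3) + 1) (((3 * m + 3 : ℕ) : ℤ) - 3 * ((m + 1 : ℕ) : ℤ) - 1) = 0 from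
      Bg_neg q _ _ (by push_cast <;> omega),
    show Bg q (2 * (3 * m + 3) + 1) (((3 * m + 3 : ℕ) : ℤ) - 3 * ((m : ℕ) : ℤ) - 1)
        = qPoch q q (2 * (3 * m + 3) + 1) / (qPoch q q 2 * qPoch q q (6 * m + 5)) from
      Bg_eq q (2 * (3 * m + 3) + 1) 2 (6 * m + 5) _ (by push_cast <;> omega) (by ring),
    hq1, hq2, hq3, hq4, hq6]
  have v2' : (1 : ℂ) - q ^ 2 ≠ 0 := by rw [sq]; exact v2
  field_simp
  ring

lemma key2_low (n m : ℕ) (h : n ≤ 3 * m) :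
    Wt q n (3 * m + 2) + Wt q n (3 * m + 3) = Gt q n (m + 1) - Gt q n m := by
  rw [Wt, Wt, Gt, Gt,
    show Bg q (2 * n + 3) ((n : ℤ) + 1 - ((3 * m + 2 : ℕ) : ℤ)) = 0 from
      Bg_neg q _ _ (by push_cast <;> omega),
    show Bg q (2 * n + 1) ((n : ℤ) - ((3 * m + 2 : ℕ) : ℤ)) = 0 from
      Bg_neg q _ _ (by push_cast <;> omega),
    show Bg q (2 * n + 3) ((n : ℤ) + 1 - ((3 * m + 3 : ℕ) : ℤ)) = 0 from
      Bg_neg q _ _ (by push_cast <;> omega),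
    show Bg q (2 * n + 1) ((n : ℤ) - ((3 * m + 3 : ℕ) : ℤ)) = 0 from
      Bg_neg q _ _ (by push_cast <;> omega),
    show Bg q (2 * n + 1) ((n : ℤ) - 3 * ((m + 1 : ℕ) : ℤ) - 1) = 0 from
      Bg_neg q _ _ (by push_cast <;> omega),
    show Bg q (2 * n + 1) ((n : ℤ) - 3 * ((m : ℕ) : ℤ) - 1) = 0 from
      Bg_neg q _ _ (by push_cast <;> omega)]
  ring

lemma key2 (hq : ‖q‖ < 1) (n m : ℕ) :
    Wt q n (3 * m + 2) + Wt q n (3 * m + 3) = Gt q n (m + 1) - Gt q n m := by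
  rcases le_or_gt n (3 * m) with h | h
  · exact key2_low q n m h
  · obtain ⟨t0, ht⟩ := Nat.exists_eq_add_of_le h
    rcases t0 with _ | t0
    · rw [show n = 3 * m + 1 by omega]; exact key2_b0 q hq m
    rcases t0 with _ | t0
    · rw [show n = 3 * m + 2 by omega]; exact key2_b1 q hq m
    rcases t0 with _ | t0
    · rw [show n = 3 * m + 3 by omega]; exact key2_b2 q hq m
    · rw [show n = 3 * m + 4 + t0 by omega]; exact key2_generic q hq m t0

lemma key0 (hq : ‖q‖ < 1) (n : ℕ) : Wt q n 0 = Gt q n 0 := by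
  have h0 : qPoch q q 0 = 1 := Finset.prod_range_zero _
  rcases n with _ | s
  · have v1 : (1 : ℂ) - q ≠ 0 := by simpa using one_sub_ne q hq 0
    have v2 : (1 : ℂ) - q * q ≠ 0 := by simpa using one_sub_ne q hq 1
    have hP1 : qPoch q q 1 ≠ 0 := qPoch_ne q hq _
    have hP2 : qPoch q q 2 ≠ 0 := qPoch_ne q hq _
    have hq1 : qPoch q q (2 * 0 + 3) / (qPoch q q 1 * qPoch q q 2)
        = (1 - q * q ^ (2 : ℕ)) / (1 - q) := by
      rw [div_eq_div_iff (mul_ne_zero hP1 hP2) v1,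
        show 2 * 0 + 3 = 2 + 1 by ring, qPoch_e1 q 2, qPoch_v2 q, qPoch_v1 q]
      ring
    have hq2 : qPoch q q (2 * 0 + 1) / (qPoch q q 0 * qPoch q q 1) = 1 := by
      rw [h0, one_mul, show 2 * 0 + 1 = 1 by ring, div_self hP1]
    rw [Wt, Gt, alpha_eval0,
      show Bg q (2 * 0 + 3) (((0 : ℕ) : ℤ) + 1 - ((0 : ℕ) : ℤ))
          = qPoch q q (2 * 0 + 3) / (qPoch q q 1 * qPoch q q 2) from
        Bg_eq q (2 * 0 + 3) 1 2 _ (by push_cast <;> omega) (by ring),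
      show Bg q (2 * 0 + 1) (((0 : ℕ) : ℤ) - ((0 : ℕ) : ℤ))
          = qPoch q q (2 * 0 + 1) / (qPoch q q 0 * qPoch q q 1) from
        Bg_eq q (2 * 0 + 1) 0 1 _ (by push_cast <;> omega) (by ring),
      show Bg q (2 * 0 + 1) (((0 : ℕ) : ℤ) - 3 * ((0 : ℕ) : ℤ) - 1) = 0 from
        Bg_neg q _ _ (by push_cast <;> omega),
      hq1, hq2]
    field_simp
    ring
  · have hPs : qPoch q q s ≠ 0 := qPoch_ne q hq s
    have hPs1 : qPoch q q (s + 1) ≠ 0 := qPoch_ne q hq _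
    have hPs2 : qPoch q q (s + 2) ≠ 0 := qPoch_ne q hq _
    have hPs3 : qPoch q q (s + 3) ≠ 0 := qPoch_ne q hq _
    have eS1 : qPoch q q (s + 1) = qPoch q q s * (1 - q * q ^ s) := qPoch_e1 q s
    have eS2 : qPoch q q (s + 2) = qPoch q q (s + 1) * (1 - q * q ^ (s + 1)) := by
      rw [show s + 2 = (s + 1) + 1 from rfl]; exact qPoch_e1 q (s + 1)
    have eS3 : qPoch q q (s + 3) = qPoch q q (s + 2) * (1 - q * q ^ (s + 2)) := by
      rw [show s + 3 = (s + 2) + 1 from rfl]; exact qPoch_e1 q (s + 2)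
    set K : ℂ := qPoch q q (2 * s + 3) / (qPoch q q (s + 2) * qPoch q q (s + 3)) with hK
    have hq1 : qPoch q q (2 * (s + 1) + 3) / (qPoch q q (s + 2) * qPoch q q (s + 3))
        = ((1 - q * q ^ (2 * s + 3)) * (1 - q * q ^ (2 * s + 4))) * K := by
      rw [hK, ← mul_div_assoc,
        div_eq_div_iff (mul_ne_zero hPs2 hPs3) (mul_ne_zero hPs2 hPs3),
        show 2 * (s + 1) + 3 = (2 * s + 3) + 2 by ring, qPoch_e2 q (2 * s + 3)]
      ring
    have hq2 : qPoch q q (2 * (s + 1) + 1) / (qPoch q q (s + 1) * qPoch q q (s + 2))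
        = ((1 - q * q ^ (s + 1)) * (1 - q * q ^ (s + 2))) * K := by
      rw [hK, ← mul_div_assoc,
        div_eq_div_iff (mul_ne_zero hPs1 hPs2) (mul_ne_zero hPs2 hPs3),
        show 2 * (s + 1) + 1 = 2 * s + 3 by ring, eS3, eS2]
      ring
    have hq3 : qPoch q q (2 * (s + 1) + 1) / (qPoch q q s * qPoch q q (s + 3))
        = ((1 - q * q ^ s) * (1 - q * q ^ (s + 1))) * K := by
      rw [hK, ← mul_div_assoc,
        div_eq_div_iff (mul_ne_zero hPs hPs3) (mul_ne_zero hPs2 hPs3),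
        show 2 * (s + 1) + 1 = 2 * s + 3 by ring, eS2, eS1]
      ring
    rw [Wt, Gt, alpha_eval0,
      show Bg q (2 * (s + 1) + 3) (((s + 1 : ℕ) : ℤ) + 1 - ((0 : ℕ) : ℤ))
          = qPoch q q (2 * (s + 1) + 3) / (qPoch q q (s + 2) * qPoch q q (s + 3)) from
        Bg_eq q (2 * (s + 1) + 3) (s + 2) (s + 3) _ (by push_cast <;> omega) (by ring),
      show Bg q (2 * (s + 1) + 1) (((s + 1 : ℕ) : ℤ) - ((0 : ℕ) : ℤ))
          = qPoch q q (2 * (s + 1) + 1) / (qPoch q q (s + 1) * qPoch q q (s + 2)) from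
        Bg_eq q (2 * (s + 1) + 1) (s + 1) (s + 2) _ (by push_cast <;> omega) (by ring),
      show Bg q (2 * (s + 1) + 1) (((s + 1 : ℕ) : ℤ) - 3 * ((0 : ℕ) : ℤ) - 1)
          = qPoch q q (2 * (s + 1) + 1) / (qPoch q q s * qPoch q q (s + 3)) from
        Bg_eq q (2 * (s + 1) + 1) s (s + 3) _ (by push_cast <;> omega) (by ring),
      hq1, hq2, hq3]
    ring

lemma Wt_r1 (n m : ℕ) : Wt q n (3 * m + 1) = 0 := by
  rw [Wt, alpha_eval1]; ring

lemma partial_sum (hq : ‖q‖ < 1) (n : ℕ) : ∀ m : ℕ,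
    ∑ r ∈ Finset.range (3 * m + 2), Wt q n r = Gt q n m := by
  intro m
  induction m with
  | zero =>
    show ∑ r ∈ Finset.range 2, Wt q n r = Gt q n 0
    rw [Finset.sum_range_succ, Finset.sum_range_one]
    have h1 : Wt q n 1 = 0 := by simpa using Wt_r1 q n 0
    rw [h1, key0 q hq n, add_zero]
  | succ m ih =>
    show ∑ r ∈ Finset.range ((3 * m + 2) + 1 + 1 + 1), Wt q n r = Gt q n (m + 1)
    rw [Finset.sum_range_succ, Finset.sum_range_succ, Finset.sum_range_succ,
      show (3 * m + 2) + 1 + 1 = 3 * (m + 1) + 1 by ring,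
      show (3 * m + 2) + 1 = 3 * m + 3 by ring, ih, Wt_r1 q n (m + 1)]
    linear_combination key2 q hq n m

lemma Wt_big (n r : ℕ) (h : n + 2 ≤ r) : Wt q n r = 0 := by
  rw [Wt,
    show Bg q (2 * n + 3) ((n : ℤ) + 1 - r) = 0 from Bg_neg q _ _ (by omega),
    show Bg q (2 * n + 1) ((n : ℤ) - r) = 0 from Bg_neg q _ _ (by omega)]
  ring

lemma total (hq : ‖q‖ < 1) (n : ℕ) : ∑ r ∈ Finset.range (n + 2), Wt q n r = 0 := by
  have h1 := partial_sum q hq n (n + 1)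
  have h2 : Gt q n (n + 1) = 0 := by
    rw [Gt, Bg_neg q _ _ (by push_cast <;> omega), mul_zero]
  have h3 : ∑ r ∈ Finset.range (n + 2), Wt q n r
      = ∑ r ∈ Finset.range (3 * (n + 1) + 2), Wt q n r := by
    apply Finset.sum_subset (Finset.range_subset_range.2 (by omega))
    intro x hx hnx
    simp only [Finset.mem_range] at hnx
    exact Wt_big q n x (by omega)
  rw [h3, h1, h2]

noncomputable def Tb (n : ℕ) : ℂ :=
  ∑ r ∈ Finset.range (n + 1), alphaS6 q r * Bg q (2 * n + 1) ((n : ℤ) - r)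

lemma Trec (hq : ‖q‖ < 1) (n : ℕ) :
    (1 - q ^ (2 * n + 1)) * Tb q (n + 1) = q ^ (2 * n) * (1 - q ^ (2 * n + 3)) * Tb q n := by
  have h := total q hq n
  have expand : ∑ r ∈ Finset.range (n + 2), Wt q n r
      = (1 - q ^ (2 * n + 1)) * (∑ r ∈ Finset.range (n + 2),
          alphaS6 q r * Bg q (2 * n + 3) ((n : ℤ) + 1 - r))
        - q ^ (2 * n) * (1 - q ^ (2 * n + 3)) * (∑ r ∈ Finset.range (n + 2),
          alphaS6 q r * Bg q (2 * n + 1) ((n : ℤ) - r)) := by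
    rw [Finset.mul_sum, Finset.mul_sum, ← Finset.sum_sub_distrib]
    exact Finset.sum_congr rfl fun r _ => by rw [Wt]; ring
  have e1 : Tb q (n + 1) = ∑ r ∈ Finset.range (n + 2),
      alphaS6 q r * Bg q (2 * n + 3) ((n : ℤ) + 1 - r) := by
    rw [Tb]
    exact Finset.sum_congr rfl fun r _ => by
      rw [show 2 * (n + 1) + 1 = 2 * n + 3 by ring,
        show ((n + 1 : ℕ) : ℤ) - (r : ℤ) = (n : ℤ) + 1 - r by push_cast; ring]
  have e2 : ∑ r ∈ Finset.range (n + 2),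
      alphaS6 q r * Bg q (2 * n + 1) ((n : ℤ) - r) = Tb q n := by
    rw [show n + 2 = (n + 1) + 1 from rfl, Finset.sum_range_succ, Tb,
      show Bg q (2 * n + 1) ((n : ℤ) - ((n + 1 : ℕ) : ℤ)) = 0 from
        Bg_neg q _ _ (by push_cast <;> omega), mul_zero, add_zero]
  rw [e1, ← e2]
  exact sub_eq_zero.mp (expand.symm.trans h)

lemma one_sub_pow_ne (hq : ‖q‖ < 1) (k : ℕ) : (1 : ℂ) - q ^ (k + 1) ≠ 0 := by
  have := one_sub_ne q hq k
  rwa [show q * q ^ k = q ^ (k + 1) by rw [pow_succ]; ring] at this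

lemma Tclosed (hq : ‖q‖ < 1) (n : ℕ) :
    Tb q n = q ^ (n ^ 2 - n) * (1 - q ^ (2 * n + 1)) := by
  induction n with
  | zero =>
    rw [Tb, Finset.sum_range_one, alpha_eval0,
      show Bg q (2 * 0 + 1) (((0 : ℕ) : ℤ) - ((0 : ℕ) : ℤ))
          = qPoch q q (2 * 0 + 1) / (qPoch q q 0 * qPoch q q 1) from
        Bg_eq q (2 * 0 + 1) 0 1 _ (by push_cast <;> omega) (by ring),
      show 2 * 0 + 1 = 1 by ring, qPoch_v1 q,
      show qPoch q q 0 = 1 from Finset.prod_range_zero _]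
    have v1 : (1 : ℂ) - q ≠ 0 := by simpa using one_sub_ne q hq 0
    field_simp
    norm_num
  | succ n ih =>
    have h := Trec q hq n
    rw [ih] at h
    have hA : (1 : ℂ) - q ^ (2 * n + 1) ≠ 0 := one_sub_pow_ne q hq (2 * n)
    apply mul_left_cancel₀ hA
    rw [h]
    have h1 : n ≤ n ^ 2 := Nat.le_self_pow (by norm_num) n
    have h2 : n + 1 ≤ (n + 1) ^ 2 := Nat.le_self_pow (by norm_num) (n + 1)
    have hE : (n + 1) ^ 2 - (n + 1) = (n ^ 2 - n) + 2 * n := by zify [h1, h2]; ring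
    rw [show 2 * (n + 1) + 1 = 2 * n + 3 by ring, hE, pow_add]
    ring

end Key

theorem stmt6 (q : ℂ) (hq : ‖q‖ < 1) (n : ℕ) :
    (1 - q) * q ^ (n ^ 2 - n) / qPoch q q (2 * n)
      = ∑ r ∈ Finset.range (n + 1), alphaS6 q r / (qPoch q q (n - r) * qPoch (q ^ 2) q (n + r)) := by
  have v1 : (1 : ℂ) - q ≠ 0 := by simpa using one_sub_ne q hq 0
  have hterm : ∀ r ∈ Finset.range (n + 1),
      alphaS6 q r / (qPoch q q (n - r) * qPoch (q ^ 2) q (n + r))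
        = (alphaS6 q r * Bg q (2 * n + 1) ((n : ℤ) - r)) * ((1 - q) / qPoch q q (2 * n + 1)) := by
    intro r hr
    have hrn : r ≤ n := by simp only [Finset.mem_range] at hr; omega
    have hnr : qPoch q q (n - r) ≠ 0 := qPoch_ne q hq _
    have hnr1 : qPoch q q (n + r + 1) ≠ 0 := qPoch_ne q hq _
    have h2n1 : qPoch q q (2 * n + 1) ≠ 0 := qPoch_ne q hq _
    have hsq : qPoch (q ^ 2) q (n + r) = qPoch q q (n + r + 1) / (1 - q) := by
      rw [eq_div_iff v1]
      linear_combination qPoch_sq q (n + r)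
    rw [Bg_eq q (2 * n + 1) (n - r) (n + r + 1) _ (by push_cast <;> omega) (by omega), hsq]
    field_simp
  rw [Finset.sum_congr rfl hterm, ← Finset.sum_mul]
  have hTb : ∑ r ∈ Finset.range (n + 1), alphaS6 q r * Bg q (2 * n + 1) ((n : ℤ) - r) = Tb q n := rfl
  rw [hTb, Tclosed q hq n, qPoch_e1 q (2 * n)]
  have h2n : qPoch q q (2 * n) ≠ 0 := qPoch_ne q hq _
  have u0 : (1 : ℂ) - q * q ^ (2 * n) ≠ 0 := one_sub_ne q hq _
  field_simp
  ring
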